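/- arXiv:1503.04360 — 4 statements merged into one kernel-verified Lean document; each statement's English description precedes it below -/
import Mathlib

section
/- Fix λ > 0 and γ > 0, and define T(A) = g(A)/(g(A)^2 + λ) with g(A) = A/(A^2+γ). If A₁ > 0 and A₂ > 0 are both fixed points of T (i.e., T(A₁) = A₁ and T(A₂) = A₂), then A₁ = A₂. That is, T has at most one strictly positive fixed point. -/
theorem stmt_5 (l γ : ℝ) (hl : 0 < l) (hγ : 0 < γ)
    (g T : ℝ → ℝ) (hg : ∀ A, g A = A / (A ^ 2 + γ))
    (hT : ∀ A, T A = g A / ((g A) ^ 2 + l))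
    (A₁ A₂ : ℝ) (h₁ : 0 < A₁) (h₂ : 0 < A₂)
    (hf₁ : T A₁ = A₁) (hf₂ : T A₂ = A₂) :
    A₁ = A₂ := by
  have key : ∀ A : ℝ, 0 < A → T A = A → l * (A ^ 2 + γ) ^ 2 = γ := by
    intro A hA hf
    rw [hT, hg] at hf
    have hd : A ^ 2 + γ ≠ 0 := by positivity
    have hd2 : (A / (A ^ 2 + γ)) ^ 2 + l ≠ 0 := by positivity
    field_simp at hf
    linear_combination -hf
  have k1 := key A₁ h₁ hf₁
  have k2 := key A₂ h₂ hf₂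
  have hsq : (A₁ ^ 2 + γ) ^ 2 = (A₂ ^ 2 + γ) ^ 2 := by
    have : l * (A₁ ^ 2 + γ) ^ 2 = l * (A₂ ^ 2 + γ) ^ 2 := by linarith
    exact mul_left_cancel₀ hl.ne' this
  have h12 : A₁ ^ 2 + γ = A₂ ^ 2 + γ := by
    nlinarith [sq_nonneg (A₁^2 - A₂^2), sq_nonneg A₁, sq_nonneg A₂]
  nlinarith [sq_nonneg (A₁ - A₂), sq_nonneg (A₁ + A₂)]
end

section
/- Let λ > 0, σ_m² > 0, σ_w² > 0, and suppose A ≠ 0 satisfies the fixed point equations A = 1/(K + λ/K) and K = A σ_m² / (A² σ_m² + σ_w²) for some K ≠ 0. Then K² = sqrt(λ σ_m² / σ_w²) − λ, and in particular a real nonzero solution exists only if λ < σ_m²/σ_w². -/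
theorem stmt_6 (l σm2 σw2 A K : ℝ) (hl : 0 < l) (hm : 0 < σm2) (hw : 0 < σw2)
    (hA : A ≠ 0) (hK : K ≠ 0)
    (h1 : A = 1 / (K + l / K))
    (h2 : K = A * σm2 / (A ^ 2 * σm2 + σw2)) :
    K ^ 2 = Real.sqrt (l * σm2 / σw2) - l ∧ l < σm2 / σw2 := by
  have hden : A ^ 2 * σm2 + σw2 ≠ 0 := by positivity
  have ht : (0:ℝ) < K ^ 2 + l := by positivity
  have hA' : A = K / (K ^ 2 + l) := by
    rw [h1]
    rw [div_eq_div_iff (by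
      intro h
      rw [h] at h1; simp at h1; exact hA h1) ht.ne']
    field_simp
  have e2 : K * (A ^ 2 * σm2 + σw2) = A * σm2 := by
    rw [h2]; field_simp
  rw [hA'] at e2
  field_simp at e2
  -- e2 is now a polynomial identity
  have key : σw2 * (K ^ 2 + l) ^ 2 = l * σm2 := by
    have hfac : K * (σw2 * (K ^ 2 + l) ^ 2 - l * σm2) = 0 := by linear_combination K * e2
    rcases mul_eq_zero.mp hfac with h | h
    · exact absurd h hK
    · linarith
  have hK2 : (0:ℝ) < K ^ 2 := by positivity
  have hsq : Real.sqrt (l * σm2 / σw2) = K ^ 2 + l := by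
    have : l * σm2 / σw2 = (K ^ 2 + l) ^ 2 := by
      field_simp; linarith [key]
    rw [this, Real.sqrt_sq ht.le]
  constructor
  · rw [hsq]; ring
  · rw [lt_div_iff₀ hw]
    nlinarith [key, mul_pos hw (mul_pos hK2 (by positivity : (0:ℝ) < K ^ 2 + 2 * l))]
end

section
/- Let σ_m², σ_w² > 0, b ∈ ℝ. Define the informative game cost g_i = 3√(λσ_m²σ_w²) + b²√(σ_m²/(λσ_w²)) − λσ_w², non-informative game cost g_u = 2σ_m² + b², informative team cost t_i = 2√(2λσ_m²σ_w²) + b²/2 − λσ_w², and non-informative team cost t_u = 2σ_m² + b²/2. Then for 0 < λ < σ_m²/σ_w², t_i < g_i, and for all λ > 0 and b ≠ 0 (or in general), t_u < g_u whenever b ≠ 0 and t_u ≤ g_u always. Consequently, with J*,g = min{g_i, g_u} when λ < σ_m²/σ_w² and J*,g = g_u otherwise, and J*,t = min{t_i, t_u} when λ < 2σ_m²/σ_w² and J*,t = t_u otherwise, it holds that J*,t ≤ J*,g, with strict inequality when b ≠ 0. -/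
theorem stmt_10 (σm2 σw2 l b : ℝ) (hm : 0 < σm2) (hw : 0 < σw2) (hl : 0 < l)
    (gi gu ti tu Jg Jt : ℝ)
    (hgi : gi = 3 * Real.sqrt (l * σm2 * σw2)
      + b ^ 2 * Real.sqrt (σm2 / (l * σw2)) - l * σw2)
    (hgu : gu = 2 * σm2 + b ^ 2)
    (hti : ti = 2 * Real.sqrt (2 * l * σm2 * σw2) + b ^ 2 / 2 - l * σw2)
    (htu : tu = 2 * σm2 + b ^ 2 / 2)
    (hJg : Jg = if l < σm2 / σw2 then min gi gu else gu)
    (hJt : Jt = if l < 2 * σm2 / σw2 then min ti tu else tu) :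
    (l < σm2 / σw2 → ti < gi) ∧ (b ≠ 0 → tu < gu) ∧ tu ≤ gu ∧
    Jt ≤ Jg ∧ (b ≠ 0 → Jt < Jg) := by
  have key : l < σm2 / σw2 → ti < gi := by
    intro h
    have hls : l * σw2 < σm2 := (lt_div_iff₀ hw).mp h
    have hs : 0 < Real.sqrt (l * σm2 * σw2) := Real.sqrt_pos.mpr (by positivity)
    have h2 : Real.sqrt (2 * l * σm2 * σw2)
        = Real.sqrt 2 * Real.sqrt (l * σm2 * σw2) := by
      rw [← Real.sqrt_mul (by norm_num)]; ring_nf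
    have hr : 1 ≤ Real.sqrt (σm2 / (l * σw2)) := by
      rw [show (1:ℝ) = Real.sqrt 1 by simp]
      apply Real.sqrt_le_sqrt
      rw [le_div_iff₀ (by positivity)]
      linarith
    have hsqrt2 : Real.sqrt 2 < 3 / 2 := by
      rw [show (3/2:ℝ) = Real.sqrt ((3/2)^2) by rw [Real.sqrt_sq]; norm_num]
      exact Real.sqrt_lt_sqrt (by norm_num) (by norm_num)
    have hb : b ^ 2 / 2 ≤ b ^ 2 * Real.sqrt (σm2 / (l * σw2)) := by
      nlinarith [sq_nonneg b]
    rw [hti, hgi, h2]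
    nlinarith
  have htugu : (b ≠ 0 → tu < gu) ∧ tu ≤ gu := by
    constructor
    · intro hb
      have : 0 < b ^ 2 := by positivity
      rw [htu, hgu]; linarith
    · rw [htu, hgu]; nlinarith [sq_nonneg b]
  have hJ : Jt ≤ Jg ∧ (b ≠ 0 → Jt < Jg) := by
    by_cases h1 : l < σm2 / σw2
    · have h2 : l < 2 * σm2 / σw2 := by
        have : σm2 / σw2 < 2 * σm2 / σw2 := by
          rw [div_lt_div_iff₀ hw hw]; nlinarith
        linarith [this]
      rw [hJg, hJt, if_pos h1, if_pos h2]
      have hti' := key h1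
      constructor
      · exact le_min (le_trans (min_le_left _ _) hti'.le)
          (le_trans (min_le_right _ _) htugu.2)
      · intro hb
        exact lt_min (lt_of_le_of_lt (min_le_left _ _) hti')
          (lt_of_le_of_lt (min_le_right _ _) (htugu.1 hb))
    · rw [hJg, hJt, if_neg h1]
      by_cases h2 : l < 2 * σm2 / σw2
      · rw [if_pos h2]
        exact ⟨le_trans (min_le_right _ _) htugu.2,
          fun hb => lt_of_le_of_lt (min_le_right _ _) (htugu.1 hb)⟩
      · rw [if_neg h2]
        exact ⟨htugu.2, htugu.1⟩
  exact ⟨key, htugu.1, htugu.2, hJ.1, hJ.2⟩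
end

section
/- In the Stackelberg scalar Gaussian signaling game with linear encoder x = Am + C, the encoder cost equals J(A,C) = σ_m²σ_w²/(A²σ_m² + σ_w²) + b² + λA²σ_m² + λC². This is minimized at C* = 0 and, if λ ≥ σ_m²/σ_w², at A* = 0 with minimum σ_m² + b²; if 0 < λ < σ_m²/σ_w², at (A*)² = sqrt(σ_w²/(λσ_m²)) − σ_w²/σ_m² with minimum 2√(λσ_m²σ_w²) + b² − λσ_w². -/
open MeasureTheory ProbabilityTheory
open scoped NNReal

open Real
open scoped ENNReal


lemma integral_id_mul_gauss {bb : ℝ} (hb : 0 < bb) :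
    ∫ x : ℝ, x * Real.exp (-bb * x ^ 2) = 0 := by
  have hderiv : ∀ x : ℝ, HasDerivAt (fun y : ℝ => -(2 * bb)⁻¹ * Real.exp (-bb * y ^ 2))
      (x * Real.exp (-bb * x ^ 2)) x := by
    intro x
    have h1 : HasDerivAt (fun y : ℝ => -bb * y ^ 2) (-bb * (2 * x)) x := by
      simpa using ((hasDerivAt_pow 2 x).const_mul (-bb))
    have h2 := (h1.exp).const_mul (-(2 * bb)⁻¹)
    refine h2.congr_deriv ?_
    field_simp
  have h := integral_eq_zero_of_hasDerivAt_of_integrable hderiv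
    (integrable_mul_exp_neg_mul_sq hb)
    (((integrable_exp_neg_mul_sq hb).const_mul (-(2 * bb)⁻¹)))
  exact h

lemma integrable_sq_mul_gauss {bb : ℝ} (hb : 0 < bb) :
    Integrable (fun x : ℝ => x ^ 2 * Real.exp (-bb * x ^ 2)) := by
  have h := integrable_rpow_mul_exp_neg_mul_sq hb (s := 2) (by norm_num)
  refine h.congr (Filter.Eventually.of_forall fun x => ?_)
  have h2 : (x : ℝ) ^ (2 : ℝ) = x ^ (2 : ℕ) := by
    rw [show ((2 : ℝ) = ((2 : ℕ) : ℝ)) by norm_num, Real.rpow_natCast]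
  simp only [h2]

lemma integral_sq_mul_gauss {bb : ℝ} (hb : 0 < bb) :
    ∫ x : ℝ, x ^ 2 * Real.exp (-bb * x ^ 2) = (2 * bb)⁻¹ * Real.sqrt (π / bb) := by
  have hderiv : ∀ x : ℝ, HasDerivAt (fun y : ℝ => -(2 * bb)⁻¹ * (y * Real.exp (-bb * y ^ 2)))
      (x ^ 2 * Real.exp (-bb * x ^ 2) - (2 * bb)⁻¹ * Real.exp (-bb * x ^ 2)) x := by
    intro x
    have h1 : HasDerivAt (fun y : ℝ => -bb * y ^ 2) (-bb * (2 * x)) x := by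
      simpa using ((hasDerivAt_pow 2 x).const_mul (-bb))
    have h2 : HasDerivAt (fun y : ℝ => y * Real.exp (-bb * y ^ 2))
        (1 * Real.exp (-bb * x ^ 2) + x * (Real.exp (-bb * x ^ 2) * (-bb * (2 * x)))) x :=
      (hasDerivAt_id x).mul h1.exp
    have h3 := h2.const_mul (-(2 * bb)⁻¹)
    refine h3.congr_deriv ?_
    field_simp
    ring
  have hint : Integrable (fun x : ℝ =>
      x ^ 2 * Real.exp (-bb * x ^ 2) - (2 * bb)⁻¹ * Real.exp (-bb * x ^ 2)) :=
    (integrable_sq_mul_gauss hb).sub ((integrable_exp_neg_mul_sq hb).const_mul _)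
  have h := integral_eq_zero_of_hasDerivAt_of_integrable hderiv hint
    ((integrable_mul_exp_neg_mul_sq hb).const_mul (-(2 * bb)⁻¹))
  rw [integral_sub (integrable_sq_mul_gauss hb) ((integrable_exp_neg_mul_sq hb).const_mul _),
    integral_const_mul, integral_gaussian, sub_eq_zero] at h
  exact h


section
variable {v : ℝ≥0}

lemma gaussianReal_eq_withDensity (hv : v ≠ 0) :
    gaussianReal 0 v = volume.withDensity
      (fun x => ((gaussianPDFReal 0 v x).toNNReal : ℝ≥0∞)) := by
  rw [gaussianReal_of_var_ne_zero 0 hv]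
  rfl

lemma measurable_toNNReal_pdf : Measurable (fun x => (gaussianPDFReal 0 v x).toNNReal) :=
  (measurable_gaussianPDFReal 0 v).real_toNNReal

lemma integral_gaussianReal_eq (hv : v ≠ 0) (g : ℝ → ℝ) :
    ∫ x, g x ∂(gaussianReal 0 v) = ∫ x, gaussianPDFReal 0 v x * g x := by
  rw [gaussianReal_eq_withDensity hv,
    integral_withDensity_eq_integral_smul measurable_toNNReal_pdf g]
  congr 1
  ext x
  rw [NNReal.smul_def, smul_eq_mul, Real.coe_toNNReal _ (gaussianPDFReal_nonneg 0 v x)]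

lemma integrable_gaussianReal_iff (hv : v ≠ 0) {g : ℝ → ℝ} :
    Integrable g (gaussianReal 0 v) ↔
      Integrable (fun x => gaussianPDFReal 0 v x * g x) := by
  rw [gaussianReal_eq_withDensity hv,
    integrable_withDensity_iff_integrable_smul measurable_toNNReal_pdf]
  apply integrable_congr
  refine Filter.Eventually.of_forall fun x => ?_
  simp only [NNReal.smul_def, smul_eq_mul, Real.coe_toNNReal _ (gaussianPDFReal_nonneg 0 v x)]

lemma pdf_eq (hv : v ≠ 0) (x : ℝ) :
    gaussianPDFReal 0 v x = (Real.sqrt (2 * π * v))⁻¹ * Real.exp (-(2 * (v:ℝ))⁻¹ * x ^ 2) := by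
  rw [gaussianPDFReal]
  have hv' : (0:ℝ) < v := by positivity
  congr 1
  rw [sub_zero]
  congr 1
  field_simp

lemma integrable_id_gaussianReal (hv : v ≠ 0) :
    Integrable (fun x : ℝ => x) (gaussianReal 0 v) := by
  have hv' : (0:ℝ) < (v:ℝ) := by positivity
  have hb : (0:ℝ) < (2 * (v:ℝ))⁻¹ := by positivity
  rw [integrable_gaussianReal_iff hv]
  refine ((integrable_mul_exp_neg_mul_sq hb).const_mul (Real.sqrt (2 * π * v))⁻¹).congr
    (Filter.Eventually.of_forall fun x => ?_)
  simp only [pdf_eq hv]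
  ring

lemma integral_id_gaussianReal (hv : v ≠ 0) :
    ∫ x, x ∂(gaussianReal 0 v) = 0 := by
  have hv' : (0:ℝ) < (v:ℝ) := by positivity
  have hb : (0:ℝ) < (2 * (v:ℝ))⁻¹ := by positivity
  rw [integral_gaussianReal_eq hv]
  have : ∀ x : ℝ, gaussianPDFReal 0 v x * x
      = (Real.sqrt (2 * π * v))⁻¹ * (x * Real.exp (-(2 * (v:ℝ))⁻¹ * x ^ 2)) := by
    intro x; rw [pdf_eq hv]; ring
  simp_rw [this, integral_const_mul, integral_id_mul_gauss hb, mul_zero]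

lemma integrable_sq_gaussianReal (hv : v ≠ 0) :
    Integrable (fun x : ℝ => x ^ 2) (gaussianReal 0 v) := by
  have hv' : (0:ℝ) < (v:ℝ) := by positivity
  have hb : (0:ℝ) < (2 * (v:ℝ))⁻¹ := by positivity
  rw [integrable_gaussianReal_iff hv]
  refine ((integrable_sq_mul_gauss hb).const_mul (Real.sqrt (2 * π * v))⁻¹).congr
    (Filter.Eventually.of_forall fun x => ?_)
  simp only [pdf_eq hv]
  ring

lemma integral_sq_gaussianReal (hv : v ≠ 0) :
    ∫ x, x ^ 2 ∂(gaussianReal 0 v) = (v : ℝ) := by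
  have hv' : (0:ℝ) < (v:ℝ) := by positivity
  have hb : (0:ℝ) < (2 * (v:ℝ))⁻¹ := by positivity
  rw [integral_gaussianReal_eq hv]
  have : ∀ x : ℝ, gaussianPDFReal 0 v x * x ^ 2
      = (Real.sqrt (2 * π * v))⁻¹ * (x ^ 2 * Real.exp (-(2 * (v:ℝ))⁻¹ * x ^ 2)) := by
    intro x; rw [pdf_eq hv]; ring
  simp_rw [this, integral_const_mul, integral_sq_mul_gauss hb]
  rw [show ((2 : ℝ) * (2 * (v:ℝ))⁻¹)⁻¹ = v by field_simp]
  rw [show (π / (2 * (v:ℝ))⁻¹) = 2 * π * v by field_simp]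
  have hs : Real.sqrt (2 * π * (v:ℝ)) ≠ 0 := by
    refine ne_of_gt (Real.sqrt_pos.mpr (by positivity))
  field_simp


section linmap

variable (al be ga de : ℝ)

noncomputable def Lmap : (ℝ × ℝ) →ₗ[ℝ] (ℝ × ℝ) :=
  Matrix.toLin (Module.Basis.finTwoProd ℝ) (Module.Basis.finTwoProd ℝ) !![al, be; ga, de]

lemma Lmap_apply (p : ℝ × ℝ) :
    Lmap al be ga de p = (al * p.1 + be * p.2, ga * p.1 + de * p.2) := by
  rw [Lmap, Matrix.toLin_finTwoProd_apply]

lemma Lmap_det : LinearMap.det (Lmap al be ga de) = al * de - be * ga := by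
  rw [Lmap, LinearMap.det_toLin, Matrix.det_fin_two_of]

variable {al be ga de} (hdet : al * de - be * ga = 1)

noncomputable def Leqv : (ℝ × ℝ) ≃ₗ[ℝ] (ℝ × ℝ) :=
  LinearEquiv.ofLinear (Lmap al be ga de) (Lmap de (-be) (-ga) al)
    (by
      apply LinearMap.ext
      intro p
      simp only [LinearMap.comp_apply, Lmap_apply, LinearMap.id_apply]
      obtain ⟨x, y⟩ := p
      simp only [Prod.mk.injEq]
      refine ⟨by linear_combination x * hdet, by linear_combination y * hdet⟩)
    (by
      apply LinearMap.ext
      intro p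
      simp only [LinearMap.comp_apply, Lmap_apply, LinearMap.id_apply]
      obtain ⟨x, y⟩ := p
      simp only [Prod.mk.injEq]
      refine ⟨by linear_combination x * hdet, by linear_combination y * hdet⟩)

noncomputable def Meqv : (ℝ × ℝ) ≃ᵐ (ℝ × ℝ) :=
  ((Leqv hdet).toContinuousLinearEquiv.toHomeomorph).toMeasurableEquiv

lemma Meqv_apply (p : ℝ × ℝ) :
    Meqv hdet p = (al * p.1 + be * p.2, ga * p.1 + de * p.2) := by
  change (Leqv hdet) p = _
  rw [Leqv]
  exact Lmap_apply al be ga de p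

lemma Meqv_symm_apply (p : ℝ × ℝ) :
    (Meqv hdet).symm p = (de * p.1 + -be * p.2, -ga * p.1 + al * p.2) := by
  change (Leqv hdet).symm p = _
  rw [Leqv]
  exact Lmap_apply de (-be) (-ga) al p

lemma map_volume_Meqv : (volume : Measure (ℝ × ℝ)).map (Meqv hdet) = volume := by
  have h1 : (⇑(Meqv hdet) : ℝ × ℝ → ℝ × ℝ) = ⇑(Lmap al be ga de) := rfl
  have h2 := Measure.map_linearMap_addHaar_eq_smul_addHaar
    (volume : Measure (ℝ × ℝ)) (f := Lmap al be ga de) (by rw [Lmap_det, hdet]; norm_num)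
  rw [h1, h2, Lmap_det, hdet]
  norm_num

end linmap

lemma map_withDensity_equiv {α β : Type*} [MeasurableSpace α] [MeasurableSpace β]
    (e : α ≃ᵐ β) (ρ : Measure α) {D : α → ℝ≥0∞} (hD : Measurable D) :
    (ρ.withDensity D).map e = (ρ.map e).withDensity (fun y => D (e.symm y)) := by
  ext s hs
  rw [Measure.map_apply e.measurable hs, withDensity_apply _ (e.measurable hs),
    withDensity_apply _ hs, setLIntegral_map hs
      (show Measurable fun y => D (e.symm y) from hD.comp e.symm.measurable) e.measurable]
  simp only [e.symm_apply_apply]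

lemma gauss_prod_withDensity {v₁ v₂ : ℝ≥0} (h1 : v₁ ≠ 0) (h2 : v₂ ≠ 0) :
    (gaussianReal 0 v₁).prod (gaussianReal 0 v₂)
      = (volume.prod volume).withDensity
          (fun p => gaussianPDF 0 v₁ p.1 * gaussianPDF 0 v₂ p.2) := by
  refine Measure.prod_eq fun s t hs ht => ?_
  rw [withDensity_apply _ (hs.prod ht), ← Measure.prod_restrict,
    lintegral_prod_mul ((measurable_gaussianPDF 0 v₁).aemeasurable)
      ((measurable_gaussianPDF 0 v₂).aemeasurable),
    gaussianReal_apply 0 h1 s, gaussianReal_apply 0 h2 t]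

section mainmap

variable {al be ga de : ℝ} {v₁ v₂ vU vV : ℝ≥0}

lemma pdfReal_prod_identity (h1 : v₁ ≠ 0) (h2 : v₂ ≠ 0) (hU' : vU ≠ 0) (hV' : vV ≠ 0)
    (hU : (vU : ℝ) = al ^ 2 * v₁ + be ^ 2 * v₂) (hV : (vV : ℝ) = ga ^ 2 * v₁ + de ^ 2 * v₂)
    (hdet : al * de - be * ga = 1) (hcov : al * ga * v₁ + be * de * v₂ = 0) (x y : ℝ) :
    gaussianPDFReal 0 v₁ x * gaussianPDFReal 0 v₂ y
      = gaussianPDFReal 0 vU (al * x + be * y) * gaussianPDFReal 0 vV (ga * x + de * y) := by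
  have hv1 : (0:ℝ) < v₁ := by positivity
  have hv2 : (0:ℝ) < v₂ := by positivity
  have hvU : (0:ℝ) < vU := by positivity
  have hvV : (0:ℝ) < vV := by positivity
  have hmul : (vU : ℝ) * vV = (v₁ : ℝ) * v₂ := by
    rw [hU, hV]
    linear_combination ((al * de - be * ga) + 1) * (v₁:ℝ) * v₂ * hdet
      + (al * ga * v₁ + be * de * v₂) * hcov
  have hconst : (Real.sqrt (2 * π * v₁))⁻¹ * (Real.sqrt (2 * π * v₂))⁻¹
      = (Real.sqrt (2 * π * vU))⁻¹ * (Real.sqrt (2 * π * vV))⁻¹ := by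
    rw [← mul_inv, ← mul_inv, ← Real.sqrt_mul (by positivity), ← Real.sqrt_mul (by positivity)]
    congr 2
    linear_combination (-(4:ℝ) * π ^ 2) * hmul
  have hexp : -(2 * (v₁:ℝ))⁻¹ * x ^ 2 + -(2 * (v₂:ℝ))⁻¹ * y ^ 2
      = -(2 * (vU:ℝ))⁻¹ * (al * x + be * y) ^ 2 + -(2 * (vV:ℝ))⁻¹ * (ga * x + de * y) ^ 2 := by
    have e1 : -(2 * (v₁:ℝ))⁻¹ * x ^ 2 + -(2 * (v₂:ℝ))⁻¹ * y ^ 2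
        = -((x ^ 2 * v₂ + y ^ 2 * v₁) / (2 * v₁ * v₂)) := by
      field_simp
      ring
    have e2 : -(2 * (vU:ℝ))⁻¹ * (al * x + be * y) ^ 2 + -(2 * (vV:ℝ))⁻¹ * (ga * x + de * y) ^ 2
        = -(((al * x + be * y) ^ 2 * vV + (ga * x + de * y) ^ 2 * vU) / (2 * vU * vV)) := by
      field_simp
      ring
    rw [e1, e2, neg_inj, div_eq_div_iff (by positivity) (by positivity)]
    rw [hU, hV]
    linear_combination (2 * ((al * ga * v₁ + be * de * v₂) * (x ^ 2 * v₂ + y ^ 2 * v₁)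
      - 2 * (v₁:ℝ) * v₂ * (al * ga * x ^ 2 + (al * de + be * ga) * x * y
        + be * de * y ^ 2))) * hcov
  rw [pdf_eq h1, pdf_eq h2, pdf_eq hU', pdf_eq hV']
  calc (Real.sqrt (2 * π * v₁))⁻¹ * Real.exp (-(2 * (v₁:ℝ))⁻¹ * x ^ 2)
      * ((Real.sqrt (2 * π * v₂))⁻¹ * Real.exp (-(2 * (v₂:ℝ))⁻¹ * y ^ 2))
      = ((Real.sqrt (2 * π * v₁))⁻¹ * (Real.sqrt (2 * π * v₂))⁻¹)
        * Real.exp (-(2 * (v₁:ℝ))⁻¹ * x ^ 2 + -(2 * (v₂:ℝ))⁻¹ * y ^ 2) := by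
        rw [Real.exp_add]; ring
    _ = ((Real.sqrt (2 * π * vU))⁻¹ * (Real.sqrt (2 * π * vV))⁻¹)
        * Real.exp (-(2 * (vU:ℝ))⁻¹ * (al * x + be * y) ^ 2
          + -(2 * (vV:ℝ))⁻¹ * (ga * x + de * y) ^ 2) := by rw [hconst, hexp]
    _ = _ := by rw [Real.exp_add]; ring

lemma map_gauss_prod (h1 : v₁ ≠ 0) (h2 : v₂ ≠ 0) (hU' : vU ≠ 0) (hV' : vV ≠ 0)
    (hU : (vU : ℝ) = al ^ 2 * v₁ + be ^ 2 * v₂) (hV : (vV : ℝ) = ga ^ 2 * v₁ + de ^ 2 * v₂)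
    (hdet : al * de - be * ga = 1) (hcov : al * ga * v₁ + be * de * v₂ = 0) :
    ((gaussianReal 0 v₁).prod (gaussianReal 0 v₂)).map
        (fun p : ℝ × ℝ => (al * p.1 + be * p.2, ga * p.1 + de * p.2))
      = (gaussianReal 0 vU).prod (gaussianReal 0 vV) := by
  have hfun : (fun p : ℝ × ℝ => (al * p.1 + be * p.2, ga * p.1 + de * p.2))
      = ⇑(Meqv hdet) := by
    funext p
    rw [Meqv_apply]
  rw [hfun, gauss_prod_withDensity h1 h2,
    map_withDensity_equiv _ _ (show Measurable fun p : ℝ × ℝ =>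
        gaussianPDF 0 v₁ p.1 * gaussianPDF 0 v₂ p.2 from
      ((measurable_gaussianPDF 0 v₁).comp measurable_fst).mul
        ((measurable_gaussianPDF 0 v₂).comp measurable_snd)),
    ← Measure.volume_eq_prod, map_volume_Meqv, Measure.volume_eq_prod]
  rw [gauss_prod_withDensity hU' hV']
  congr 1
  funext q
  have hpt := pdfReal_prod_identity h1 h2 hU' hV' hU hV hdet hcov
    ((Meqv hdet).symm q).1 ((Meqv hdet).symm q).2
  have happ : (Meqv hdet) ((Meqv hdet).symm q) = q := (Meqv hdet).apply_symm_apply q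
  rw [Meqv_apply] at happ
  simp only [gaussianPDF_def]
  rw [← ENNReal.ofReal_mul (gaussianPDFReal_nonneg 0 v₁ _),
    ← ENNReal.ofReal_mul (gaussianPDFReal_nonneg 0 vU _), hpt]
  have hfst : al * ((Meqv hdet).symm q).1 + be * ((Meqv hdet).symm q).2 = q.1 :=
    congrArg Prod.fst happ
  have hsnd : ga * ((Meqv hdet).symm q).1 + de * ((Meqv hdet).symm q).2 = q.2 :=
    congrArg Prod.snd happ
  rw [hfst, hsnd]

end mainmap

section omegapart

variable {Ω : Type*} [MeasurableSpace Ω] {μ : Measure Ω} [IsProbabilityMeasure μ]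
  {m w : Ω → ℝ} {v₁ v₂ vU vV : ℝ≥0} {al be ga de : ℝ}

lemma joint_law (hmm : Measurable m) (hwm : Measurable w)
    (hmg : μ.map m = gaussianReal 0 v₁) (hwg : μ.map w = gaussianReal 0 v₂)
    (hind : IndepFun m w μ) :
    μ.map (fun ω => (m ω, w ω)) = (gaussianReal 0 v₁).prod (gaussianReal 0 v₂) := by
  rw [← hmg, ← hwg]
  exact (indepFun_iff_map_prod_eq_prod_map_map hmm.aemeasurable hwm.aemeasurable).mp hind

lemma lincomb_law (hmm : Measurable m) (hwm : Measurable w)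
    (hmg : μ.map m = gaussianReal 0 v₁) (hwg : μ.map w = gaussianReal 0 v₂)
    (hind : IndepFun m w μ)
    (h1 : v₁ ≠ 0) (h2 : v₂ ≠ 0) (hU' : vU ≠ 0) (hV' : vV ≠ 0)
    (hU : (vU : ℝ) = al ^ 2 * v₁ + be ^ 2 * v₂) (hV : (vV : ℝ) = ga ^ 2 * v₁ + de ^ 2 * v₂)
    (hdet : al * de - be * ga = 1) (hcov : al * ga * v₁ + be * de * v₂ = 0) :
    μ.map (fun ω => (al * m ω + be * w ω, ga * m ω + de * w ω))
      = (gaussianReal 0 vU).prod (gaussianReal 0 vV) := by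
  have hT : Measurable (fun p : ℝ × ℝ => (al * p.1 + be * p.2, ga * p.1 + de * p.2)) :=
    ((measurable_fst.const_mul al).add (measurable_snd.const_mul be)).prodMk
      ((measurable_fst.const_mul ga).add (measurable_snd.const_mul de))
  have hcomp : (fun ω => (al * m ω + be * w ω, ga * m ω + de * w ω))
      = (fun p : ℝ × ℝ => (al * p.1 + be * p.2, ga * p.1 + de * p.2))
        ∘ (fun ω => (m ω, w ω)) := rfl
  rw [hcomp, ← Measure.map_map hT (hmm.prodMk hwm),
    joint_law hmm hwm hmg hwg hind, map_gauss_prod h1 h2 hU' hV' hU hV hdet hcov]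

lemma lincomb_fst_law (hjoint : μ.map (fun ω => (al * m ω + be * w ω, ga * m ω + de * w ω))
      = (gaussianReal 0 vU).prod (gaussianReal 0 vV))
    (hmm : Measurable m) (hwm : Measurable w) :
    μ.map (fun ω => al * m ω + be * w ω) = gaussianReal 0 vU := by
  have h : (fun ω => al * m ω + be * w ω)
      = Prod.fst ∘ (fun ω => (al * m ω + be * w ω, ga * m ω + de * w ω)) := rfl
  rw [h, ← Measure.map_map measurable_fst
    (show Measurable (fun ω => (al * m ω + be * w ω, ga * m ω + de * w ω)) from
    (((hmm.const_mul al).add (hwm.const_mul be)).prodMk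
      ((hmm.const_mul ga).add (hwm.const_mul de)))), hjoint]
  simp

lemma lincomb_snd_law (hjoint : μ.map (fun ω => (al * m ω + be * w ω, ga * m ω + de * w ω))
      = (gaussianReal 0 vU).prod (gaussianReal 0 vV))
    (hmm : Measurable m) (hwm : Measurable w) :
    μ.map (fun ω => ga * m ω + de * w ω) = gaussianReal 0 vV := by
  have h : (fun ω => ga * m ω + de * w ω)
      = Prod.snd ∘ (fun ω => (al * m ω + be * w ω, ga * m ω + de * w ω)) := rfl
  rw [h, ← Measure.map_map measurable_snd
    (show Measurable (fun ω => (al * m ω + be * w ω, ga * m ω + de * w ω)) from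
    (((hmm.const_mul al).add (hwm.const_mul be)).prodMk
      ((hmm.const_mul ga).add (hwm.const_mul de)))), hjoint]
  simp

lemma lincomb_indep (hjoint : μ.map (fun ω => (al * m ω + be * w ω, ga * m ω + de * w ω))
      = (gaussianReal 0 vU).prod (gaussianReal 0 vV))
    (hmm : Measurable m) (hwm : Measurable w) :
    IndepFun (fun ω => al * m ω + be * w ω) (fun ω => ga * m ω + de * w ω) μ := by
  refine (indepFun_iff_map_prod_eq_prod_map_map
    ((hmm.const_mul al).add (hwm.const_mul be)).aemeasurable
    ((hmm.const_mul ga).add (hwm.const_mul de)).aemeasurable).mpr ?_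
  show μ.map (fun ω => (al * m ω + be * w ω, ga * m ω + de * w ω))
    = (μ.map (fun ω => al * m ω + be * w ω)).prod (μ.map (fun ω => ga * m ω + de * w ω))
  rw [hjoint, lincomb_fst_law hjoint hmm hwm, lincomb_snd_law hjoint hmm hwm]

lemma integrable_of_law (hmm : Measurable m) {v : ℝ≥0} (hv : v ≠ 0)
    (hmg : μ.map m = gaussianReal 0 v) : Integrable m μ := by
  have h := (integrable_map_measure (f := m) (g := fun x : ℝ => x)
    (by rw [hmg]; exact (integrable_id_gaussianReal hv).aestronglyMeasurable)
    hmm.aemeasurable).mp (by rw [hmg]; exact integrable_id_gaussianReal hv)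
  exact h

lemma integrable_sq_of_law (hmm : Measurable m) {v : ℝ≥0} (hv : v ≠ 0)
    (hmg : μ.map m = gaussianReal 0 v) : Integrable (fun ω => m ω ^ 2) μ := by
  have h := (integrable_map_measure (f := m) (g := fun x : ℝ => x ^ 2)
    (by rw [hmg]; exact (integrable_sq_gaussianReal hv).aestronglyMeasurable)
    hmm.aemeasurable).mp (by rw [hmg]; exact integrable_sq_gaussianReal hv)
  exact h

lemma integral_of_law (hmm : Measurable m) {v : ℝ≥0} (hv : v ≠ 0)
    (hmg : μ.map m = gaussianReal 0 v) : ∫ ω, m ω ∂μ = 0 := by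
  have h := integral_map (φ := m) (f := fun x : ℝ => x) hmm.aemeasurable
    (by rw [hmg]; exact (integrable_id_gaussianReal hv).aestronglyMeasurable)
  rw [hmg, integral_id_gaussianReal hv] at h
  exact h.symm

lemma integral_sq_of_law (hmm : Measurable m) {v : ℝ≥0} (hv : v ≠ 0)
    (hmg : μ.map m = gaussianReal 0 v) : ∫ ω, m ω ^ 2 ∂μ = (v : ℝ) := by
  have h := integral_map (φ := m) (f := fun x : ℝ => x ^ 2) hmm.aemeasurable
    (by rw [hmg]; exact (integrable_sq_gaussianReal hv).aestronglyMeasurable)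
  rw [hmg, integral_sq_gaussianReal hv] at h
  exact h.symm

end omegapart

section condexppart

variable {Ω : Type*} [MeasurableSpace Ω] {μ : Measure Ω} [IsProbabilityMeasure μ]
  {m w : Ω → ℝ} {v₁ v₂ : ℝ≥0}

lemma condexp_linear (hmm : Measurable m) (hwm : Measurable w)
    (hmg : μ.map m = gaussianReal 0 v₁) (hwg : μ.map w = gaussianReal 0 v₂)
    (hind : IndepFun m w μ) (h1 : v₁ ≠ 0) (h2 : v₂ ≠ 0)
    (A C k s : ℝ) (hs : s = A ^ 2 * v₁ + v₂) (hk : k = A * v₁ / s) :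
    μ[m | MeasurableSpace.comap (fun ω' => A * m ω' + C + w ω') Real.measurableSpace]
      =ᵐ[μ] fun ω => k * (A * m ω + w ω) := by
  have hv1 : (0:ℝ) < v₁ := by positivity
  have hv2 : (0:ℝ) < v₂ := by positivity
  have hs0 : (0:ℝ) < s := by rw [hs]; positivity
  set al : ℝ := 1 - k * A with hal
  set be : ℝ := -k with hbe
  have hdet : al * 1 - be * A = 1 := by rw [hal, hbe]; ring
  have hcov : al * A * (v₁:ℝ) + be * 1 * (v₂:ℝ) = 0 := by
    rw [hal, hbe, hk]
    field_simp
    linear_combination A * (v₁:ℝ) * hs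
  have hal_pos : 0 < al := by
    rw [hal, hk]
    have : 1 - A * (v₁:ℝ) / s * A = (v₂:ℝ) / s := by
      field_simp
      linear_combination hs
    rw [this]
    positivity
  set vZ : ℝ≥0 := ⟨al ^ 2 * v₁ + be ^ 2 * v₂, by positivity⟩ with hvZ
  set vY : ℝ≥0 := ⟨A ^ 2 * v₁ + 1 ^ 2 * v₂, by positivity⟩ with hvY
  have hvZ0 : vZ ≠ 0 := by
    refine fun h0 => absurd (congrArg (NNReal.toReal) h0) (ne_of_gt ?_)
    show (0:ℝ) < al ^ 2 * v₁ + be ^ 2 * v₂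
    positivity
  have hvY0 : vY ≠ 0 := by
    refine fun h0 => absurd (congrArg (NNReal.toReal) h0) (ne_of_gt ?_)
    show (0:ℝ) < A ^ 2 * v₁ + 1 ^ 2 * v₂
    positivity
  have hjoint := lincomb_law (vU := vZ) (vV := vY) (al := al) (be := be) (ga := A) (de := 1)
    hmm hwm hmg hwg hind h1 h2 hvZ0 hvY0 rfl rfl hdet hcov
  have hindZV := lincomb_indep hjoint hmm hwm
  have him : Integrable m μ := integrable_of_law hmm h1 hmg
  have hiw : Integrable w μ := integrable_of_law hwm h2 hwg
  -- independence of Z and y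
  have hyV : (fun ω' => A * m ω' + C + w ω')
      = (fun t => t + C) ∘ (fun ω => A * m ω + 1 * w ω) := by
    funext ω
    simp only [Function.comp_apply]
    ring
  have hindZy : IndepFun (fun ω => al * m ω + be * w ω)
      (fun ω' => A * m ω' + C + w ω') μ := by
    rw [hyV]
    exact hindZV.comp measurable_id (measurable_id.add_const C)
  have hym : Measurable (fun ω' => A * m ω' + C + w ω') :=
    ((hmm.const_mul A).add_const C).add hwm
  have hle : MeasurableSpace.comap (fun ω' => A * m ω' + C + w ω') Real.measurableSpace
      ≤ ‹MeasurableSpace Ω› := hym.comap_le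
  have hZm : Measurable (fun ω => al * m ω + be * w ω) :=
    (hmm.const_mul al).add (hwm.const_mul be)
  have hZint : Integrable (fun ω => al * m ω + be * w ω) μ :=
    (him.const_mul al).add (hiw.const_mul be)
  have hEZ : ∫ ω, al * m ω + be * w ω ∂μ = 0 := by
    rw [integral_add (him.const_mul al) (hiw.const_mul be), integral_const_mul,
      integral_const_mul, integral_of_law hmm h1 hmg, integral_of_law hwm h2 hwg]
    ring
  have hcondZ : μ[(fun ω => al * m ω + be * w ω) |
      MeasurableSpace.comap (fun ω' => A * m ω' + C + w ω') Real.measurableSpace]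
      =ᵐ[μ] fun _ => (0:ℝ) := by
    have h := condExp_indep_eq (μ := μ) hZm.comap_le hle
      ((measurable_iff_comap_le.mpr le_rfl).stronglyMeasurable
        (f := fun ω => al * m ω + be * w ω))
      hindZy
    rw [hEZ] at h
    exact h
  -- the measurable part
  set g : Ω → ℝ := fun ω => k * ((A * m ω + C + w ω) - C) with hg
  have hg_sm : StronglyMeasurable[MeasurableSpace.comap
      (fun ω' => A * m ω' + C + w ω') Real.measurableSpace] g := by
    have hyc : Measurable[MeasurableSpace.comap
        (fun ω' => A * m ω' + C + w ω') Real.measurableSpace]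
        (fun ω' => A * m ω' + C + w ω') := measurable_iff_comap_le.mpr le_rfl
    exact (((measurable_id.sub_const C).const_mul k).comp hyc).stronglyMeasurable
  have hg_int : Integrable g μ := by
    have : g = fun ω => (k * A) * m ω + k * w ω := by
      funext ω
      rw [hg]
      ring
    rw [this]
    exact (him.const_mul _).add (hiw.const_mul _)
  have hcondg : μ[g | MeasurableSpace.comap
      (fun ω' => A * m ω' + C + w ω') Real.measurableSpace] =ᵐ[μ] g :=
    Filter.EventuallyEq.of_eq (condExp_of_stronglyMeasurable hle hg_sm hg_int)
  have hmeq : m = (fun ω => al * m ω + be * w ω) + g := by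
    funext ω
    simp only [Pi.add_apply, hg, hal, hbe]
    ring
  calc μ[m | MeasurableSpace.comap (fun ω' => A * m ω' + C + w ω') Real.measurableSpace]
      = μ[(fun ω => al * m ω + be * w ω) + g | MeasurableSpace.comap
          (fun ω' => A * m ω' + C + w ω') Real.measurableSpace] := by rw [← hmeq]
    _ =ᵐ[μ] μ[(fun ω => al * m ω + be * w ω) | MeasurableSpace.comap
          (fun ω' => A * m ω' + C + w ω') Real.measurableSpace]
        + μ[g | MeasurableSpace.comap
          (fun ω' => A * m ω' + C + w ω') Real.measurableSpace] :=
        condExp_add hZint hg_int _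
    _ =ᵐ[μ] (fun _ => (0:ℝ)) + g := hcondZ.add hcondg
    _ = fun ω => k * (A * m ω + w ω) := by
        funext ω
        simp only [Pi.add_apply, hg]
        ring

end condexppart

set_option maxHeartbeats 1000000 in
theorem stmt_14 {Ω : Type*} [MeasurableSpace Ω] (μ : Measure Ω)
    [IsProbabilityMeasure μ]
    (σm2 σw2 : ℝ≥0) (hm : 0 < σm2) (hw : 0 < σw2)
    (m w : Ω → ℝ) (hmm : Measurable m) (hwm : Measurable w)
    (hmg : μ.map m = gaussianReal 0 σm2)
    (hwg : μ.map w = gaussianReal 0 σw2)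
    (hind : IndepFun m w μ)
    (l b : ℝ) (hl : 0 < l)
    (J : ℝ → ℝ → ℝ)
    (hJ : ∀ A C, J A C =
      ∫ ω, ((m ω - (μ[m | MeasurableSpace.comap
            (fun ω' => A * m ω' + C + w ω') Real.measurableSpace]) ω - b) ^ 2
          + l * (A * m ω + C) ^ 2) ∂μ)
    (f : ℝ → ℝ → ℝ)
    (hf : ∀ A C, f A C = (σm2 : ℝ) * (σw2 : ℝ) / (A ^ 2 * (σm2 : ℝ) + (σw2 : ℝ))
      + b ^ 2 + l * A ^ 2 * (σm2 : ℝ) + l * C ^ 2) :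
    (∀ A C, J A C = f A C) ∧
    (∀ A C, f A C ≥ f A 0) ∧
    (l ≥ (σm2 : ℝ) / (σw2 : ℝ) →
      (∀ A, f A 0 ≥ f 0 0) ∧ f 0 0 = (σm2 : ℝ) + b ^ 2) ∧
    (l < (σm2 : ℝ) / (σw2 : ℝ) →
      ∃ Astar : ℝ,
        Astar ^ 2 = Real.sqrt ((σw2 : ℝ) / (l * (σm2 : ℝ))) - (σw2 : ℝ) / (σm2 : ℝ) ∧
        (∀ A, f A 0 ≥ f Astar 0) ∧
        f Astar 0 = 2 * Real.sqrt (l * (σm2 : ℝ) * (σw2 : ℝ)) + b ^ 2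
          - l * (σw2 : ℝ)) := by
  have hm0 : σm2 ≠ 0 := hm.ne'
  have hw0 : σw2 ≠ 0 := hw.ne'
  have hσm : (0:ℝ) < (σm2:ℝ) := hm
  have hσw : (0:ℝ) < (σw2:ℝ) := hw
  have him : Integrable m μ := integrable_of_law hmm hm0 hmg
  have hiw : Integrable w μ := integrable_of_law hwm hw0 hwg
  have him2 : Integrable (fun ω => m ω ^ 2) μ := integrable_sq_of_law hmm hm0 hmg
  have hiw2 : Integrable (fun ω => w ω ^ 2) μ := integrable_sq_of_law hwm hw0 hwg
  have himw : Integrable (fun ω => m ω * w ω) μ := hind.integrable_mul him hiw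
  have hEm : ∫ ω, m ω ∂μ = 0 := integral_of_law hmm hm0 hmg
  have hEw : ∫ ω, w ω ∂μ = 0 := integral_of_law hwm hw0 hwg
  have hEm2 : ∫ ω, m ω ^ 2 ∂μ = (σm2:ℝ) := integral_sq_of_law hmm hm0 hmg
  have hEw2 : ∫ ω, w ω ^ 2 ∂μ = (σw2:ℝ) := integral_sq_of_law hwm hw0 hwg
  have hEmw : ∫ ω, m ω * w ω ∂μ = 0 := by
    rw [hind.integral_fun_mul_eq_mul_integral him.aestronglyMeasurable hiw.aestronglyMeasurable, hEm, hEw]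
    ring
  refine ⟨?_, ?_, ?_, ?_⟩
  · -- J = f
    intro A C
    have hs0 : (0:ℝ) < A ^ 2 * (σm2:ℝ) + (σw2:ℝ) := by positivity
    set k : ℝ := A * (σm2:ℝ) / (A ^ 2 * (σm2:ℝ) + (σw2:ℝ)) with hk
    have hce := condexp_linear hmm hwm hmg hwg hind hm0 hw0 A C k
      (A ^ 2 * (σm2:ℝ) + (σw2:ℝ)) rfl hk
    have hae : (fun ω => (m ω - (μ[m | MeasurableSpace.comap
          (fun ω' => A * m ω' + C + w ω') Real.measurableSpace]) ω - b) ^ 2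
          + l * (A * m ω + C) ^ 2)
        =ᵐ[μ] (fun ω => (m ω - k * (A * m ω + w ω) - b) ^ 2
          + l * (A * m ω + C) ^ 2) := by
      filter_upwards [hce] with ω hω
      rw [hω]
    rw [hJ, hf, integral_congr_ae hae]
    have expand : ∀ ω : Ω, (m ω - k * (A * m ω + w ω) - b) ^ 2 + l * (A * m ω + C) ^ 2
        = ((1 - k * A) ^ 2 + l * A ^ 2) * m ω ^ 2 + k ^ 2 * w ω ^ 2
          + (-2 * k * (1 - k * A)) * (m ω * w ω)
          + (-2 * b * (1 - k * A) + 2 * l * A * C) * m ω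
          + (2 * b * k) * w ω + (b ^ 2 + l * C ^ 2) := by
      intro ω
      ring
    have I1 : Integrable (fun ω => ((1 - k * A) ^ 2 + l * A ^ 2) * m ω ^ 2) μ :=
      him2.const_mul _
    have I2 : Integrable (fun ω => k ^ 2 * w ω ^ 2) μ := hiw2.const_mul _
    have I3 : Integrable (fun ω => (-2 * k * (1 - k * A)) * (m ω * w ω)) μ :=
      himw.const_mul _
    have I4 : Integrable (fun ω => (-2 * b * (1 - k * A) + 2 * l * A * C) * m ω) μ :=
      him.const_mul _
    have I5 : Integrable (fun ω => (2 * b * k) * w ω) μ := hiw.const_mul _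
    have I12 : Integrable (fun ω => ((1 - k * A) ^ 2 + l * A ^ 2) * m ω ^ 2
        + k ^ 2 * w ω ^ 2) μ := I1.add I2
    have I123 : Integrable (fun ω => ((1 - k * A) ^ 2 + l * A ^ 2) * m ω ^ 2
        + k ^ 2 * w ω ^ 2 + (-2 * k * (1 - k * A)) * (m ω * w ω)) μ := I12.add I3
    have I1234 : Integrable (fun ω => ((1 - k * A) ^ 2 + l * A ^ 2) * m ω ^ 2
        + k ^ 2 * w ω ^ 2 + (-2 * k * (1 - k * A)) * (m ω * w ω)
        + (-2 * b * (1 - k * A) + 2 * l * A * C) * m ω) μ := I123.add I4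
    have I12345 : Integrable (fun ω => ((1 - k * A) ^ 2 + l * A ^ 2) * m ω ^ 2
        + k ^ 2 * w ω ^ 2 + (-2 * k * (1 - k * A)) * (m ω * w ω)
        + (-2 * b * (1 - k * A) + 2 * l * A * C) * m ω + (2 * b * k) * w ω) μ :=
      I1234.add I5
    rw [integral_congr_ae (Filter.EventuallyEq.of_eq (funext expand)),
      integral_add I12345 (integrable_const _),
      integral_add I1234 I5,
      integral_add I123 I4,
      integral_add I12 I3,
      integral_add I1 I2,
      integral_const_mul, integral_const_mul, integral_const_mul, integral_const_mul,
      integral_const_mul, integral_const, hEm, hEw, hEm2, hEw2, hEmw]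
    simp only [measure_univ, probReal_univ, ENNReal.toReal_one, one_smul, mul_zero, add_zero]
    rw [hk]
    field_simp
    ring
  · -- f A C ≥ f A 0
    intro A C
    rw [hf, hf]
    nlinarith [mul_nonneg hl.le (sq_nonneg C)]
  · -- large l case
    intro hlge
    have hlw : (σm2:ℝ) ≤ l * (σw2:ℝ) := (div_le_iff₀ hσw).mp hlge
    have hzero : f 0 0 = (σm2:ℝ) + b ^ 2 := by
      rw [hf, show ((0:ℝ)) ^ 2 * (σm2:ℝ) + (σw2:ℝ) = (σw2:ℝ) by ring,
        mul_div_assoc, div_self hσw.ne', mul_one]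
      ring
    refine ⟨fun A => ?_, hzero⟩
    rw [hf, hzero]
    have hs0 : (0:ℝ) < A ^ 2 * (σm2:ℝ) + (σw2:ℝ) := by positivity
    have key : (σm2:ℝ) - l * A ^ 2 * (σm2:ℝ)
        ≤ (σm2:ℝ) * (σw2:ℝ) / (A ^ 2 * (σm2:ℝ) + (σw2:ℝ)) := by
      rw [le_div_iff₀ hs0]
      nlinarith [mul_nonneg (mul_nonneg (sq_nonneg A) hσm.le) (sub_nonneg.mpr hlw),
        mul_nonneg (mul_nonneg hl.le (sq_nonneg (A ^ 2))) (mul_nonneg hσm.le hσm.le)]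
    nlinarith [key]
  · -- small l case
    intro hlt
    have hlw : l * (σw2:ℝ) < (σm2:ℝ) := (lt_div_iff₀ hσw).mp hlt
    have hr0 : (0:ℝ) < Real.sqrt ((σw2:ℝ) / (l * (σm2:ℝ))) :=
      Real.sqrt_pos.mpr (by positivity)
    have hr2 : Real.sqrt ((σw2:ℝ) / (l * (σm2:ℝ))) ^ 2 = (σw2:ℝ) / (l * (σm2:ℝ)) :=
      Real.sq_sqrt (by positivity)
    have hr2' : l * (σm2:ℝ) * Real.sqrt ((σw2:ℝ) / (l * (σm2:ℝ))) ^ 2 = (σw2:ℝ) := by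
      rw [hr2]
      field_simp
    have htstar : (0:ℝ) ≤ Real.sqrt ((σw2:ℝ) / (l * (σm2:ℝ))) - (σw2:ℝ) / (σm2:ℝ) := by
      rw [sub_nonneg, Real.le_sqrt (by positivity), div_pow,
        div_le_div_iff₀ (by positivity) (by positivity)]
      nlinarith [mul_le_mul_of_nonneg_left hlw.le (mul_nonneg hσw.le hσm.le),
        mul_pos hσw hσm]
      positivity
    have hu : (Real.sqrt ((σw2:ℝ) / (l * (σm2:ℝ))) - (σw2:ℝ) / (σm2:ℝ)) * (σm2:ℝ) + (σw2:ℝ)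
        = (σm2:ℝ) * Real.sqrt ((σw2:ℝ) / (l * (σm2:ℝ))) := by
      field_simp
      ring
    have hPr : l * (σm2:ℝ) * Real.sqrt ((σw2:ℝ) / (l * (σm2:ℝ)))
        = Real.sqrt (l * (σm2:ℝ) * (σw2:ℝ)) := by
      have h1 : (l * (σm2:ℝ) * Real.sqrt ((σw2:ℝ) / (l * (σm2:ℝ)))) ^ 2
          = l * (σm2:ℝ) * (σw2:ℝ) := by
        linear_combination (l * (σm2:ℝ)) * hr2'
      rw [← h1, Real.sqrt_sq (by positivity)]
    have hdiv : (σm2:ℝ) * (σw2:ℝ) / ((σm2:ℝ) * Real.sqrt ((σw2:ℝ) / (l * (σm2:ℝ))))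
        = Real.sqrt (l * (σm2:ℝ) * (σw2:ℝ)) := by
      rw [← hPr, div_eq_iff (by positivity)]
      linear_combination (-(σm2:ℝ)) * hr2'
    have hterm : l * (Real.sqrt ((σw2:ℝ) / (l * (σm2:ℝ))) - (σw2:ℝ) / (σm2:ℝ)) * (σm2:ℝ)
        = Real.sqrt (l * (σm2:ℝ) * (σw2:ℝ)) - l * (σw2:ℝ) := by
      rw [← hPr]
      field_simp
    have hmin : f (Real.sqrt (Real.sqrt ((σw2:ℝ) / (l * (σm2:ℝ))) - (σw2:ℝ) / (σm2:ℝ))) 0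
        = 2 * Real.sqrt (l * (σm2:ℝ) * (σw2:ℝ)) + b ^ 2 - l * (σw2:ℝ) := by
      rw [hf, Real.sq_sqrt htstar, hu, hdiv, hterm]
      ring
    refine ⟨Real.sqrt (Real.sqrt ((σw2:ℝ) / (l * (σm2:ℝ))) - (σw2:ℝ) / (σm2:ℝ)),
      Real.sq_sqrt htstar, fun A => ?_, hmin⟩
    rw [hmin, hf]
    have hu0 : (0:ℝ) < A ^ 2 * (σm2:ℝ) + (σw2:ℝ) := by positivity
    have hsplit : Real.sqrt (l * (σm2:ℝ) * (σw2:ℝ))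
        = Real.sqrt l * Real.sqrt ((σm2:ℝ) * (σw2:ℝ)) := by
      rw [mul_assoc, Real.sqrt_mul hl.le]
    have key : 2 * Real.sqrt (l * (σm2:ℝ) * (σw2:ℝ)) * (A ^ 2 * (σm2:ℝ) + (σw2:ℝ))
        ≤ l * (A ^ 2 * (σm2:ℝ) + (σw2:ℝ)) ^ 2 + (σm2:ℝ) * (σw2:ℝ) := by
      rw [hsplit]
      nlinarith [sq_nonneg (Real.sqrt l * (A ^ 2 * (σm2:ℝ) + (σw2:ℝ))
          - Real.sqrt ((σm2:ℝ) * (σw2:ℝ))),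
        Real.sq_sqrt hl.le, Real.sq_sqrt (mul_nonneg hσm.le hσw.le)]
    have hbound : 2 * Real.sqrt (l * (σm2:ℝ) * (σw2:ℝ)) - l * (A ^ 2 * (σm2:ℝ) + (σw2:ℝ))
        ≤ (σm2:ℝ) * (σw2:ℝ) / (A ^ 2 * (σm2:ℝ) + (σw2:ℝ)) := by
      rw [le_div_iff₀ hu0]
      nlinarith [key]
    nlinarith [hbound]
end
end
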